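/- (Braid Vandermonde identity, base case.) For all integers a, m, n ≥ 0: Ш_{m+n−a,a} = Σ_{b,c ≥ 0, b+c=a} Ш_{m−b,b} · Ш_{n−c,c}^{↑m} · β_{m−b,c}^{↑b} in 𝕜B_∞ (summands with b > m or c > n vanish). -/

import Mathlib

namespace BraidPaper

/-- Relations of the infinite Artin braid group `B_∞`.  The generator with index `n : ℕ`
represents the Artin generator `σ_{n+1}` (so generators are `σ_1, σ_2, …`). -/
def BraidRels : Set (FreeGroup ℕ) :=
  {r | (∃ i : ℕ, r = .of i * .of (i + 1) * .of i * (.of (i + 1) * .of i * .of (i + 1))⁻¹) ∨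
       (∃ i j : ℕ, i + 2 ≤ j ∧ r = .of i * .of j * (.of j * .of i)⁻¹)}

/-- The infinite Artin braid group `B_∞`, presented by generators `σ_1, σ_2, …` and the
braid and far-commutativity relations. -/
abbrev BInf : Type := PresentedGroup BraidRels

/-- The Artin generator `σ i` of `B_∞` (meaningful for `i ≥ 1`). -/
def σ (i : ℕ) : BInf := PresentedGroup.of (i - 1)

lemma rel_eq_one {r : FreeGroup ℕ} (hr : r ∈ BraidRels) : PresentedGroup.mk BraidRels r = 1 := by
  have : r ∈ Subgroup.normalClosure BraidRels := Subgroup.subset_normalClosure hr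
  exact (QuotientGroup.eq_one_iff r).mpr this

lemma gen_braid (i : ℕ) :
    (PresentedGroup.of i : BInf) * .of (i + 1) * .of i = .of (i + 1) * .of i * .of (i + 1) := by
  have h := rel_eq_one (Or.inl ⟨i, rfl⟩)
  rw [map_mul, map_mul, map_mul, map_inv, map_mul, map_mul, mul_inv_eq_one] at h
  exact h

lemma gen_comm {i j : ℕ} (hij : i + 2 ≤ j) :
    (PresentedGroup.of i : BInf) * .of j = .of j * .of i := by
  have h := rel_eq_one (Or.inr ⟨i, j, hij, rfl⟩)
  rw [map_mul, map_mul, map_inv, map_mul, mul_inv_eq_one] at h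
  exact h

/-- The shift endomorphism `↑ℓ : B_∞ → B_∞`, `σ_i ↦ σ_{i+ℓ}`. -/
def shift (l : ℕ) : BInf →* BInf :=
  PresentedGroup.toGroup (f := fun n => (PresentedGroup.of (n + l) : BInf)) (by
    rintro r (⟨i, rfl⟩ | ⟨i, j, hij, rfl⟩) <;>
      simp only [map_mul, map_inv, FreeGroup.lift_apply_of, mul_inv_eq_one]
    · have h1 : i + 1 + l = i + l + 1 := by omega
      rw [h1]; exact gen_braid (i + l)
    · exact gen_comm (by omega : (i + l) + 2 ≤ j + l))

/-- The ascending product `σ_i σ_{i+1} ⋯ σ_{i+l-1}` (of `l` factors). -/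
def asc (i l : ℕ) : BInf := ((List.range l).map fun t => σ (i + t)).prod

/-- The descending product `σ_i σ_{i-1} ⋯ σ_{i-k+1}` (of `k` factors). -/
def desc (i k : ℕ) : BInf := ((List.range k).map fun t => σ (i - t)).prod

/-- The block transposition braid
`β_{k,l} = (σ_k σ_{k+1} ⋯ σ_{k+l-1})(σ_{k-1} σ_k ⋯ σ_{k+l-2}) ⋯ (σ_1 σ_2 ⋯ σ_l)`,
with `β_{k,0} = β_{0,l} = 1`. -/
def β (k l : ℕ) : BInf := ((List.range k).map fun r => asc (k - r) l).prod

/-- The positive (Garside) lift `ω_a = β_{1,1} β_{2,1} ⋯ β_{a-1,1}` of the longest element of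
the symmetric group `S_a`, with `ω_0 = ω_1 = 1`. -/
def ω (a : ℕ) : BInf := ((List.range (a - 1)).map fun t => β (t + 1) 1).prod

/-- The copy of the braid group `B_n` inside `B_∞`: the subgroup generated by
`σ_1, …, σ_{n-1}`. -/
def BSub (n : ℕ) : Subgroup BInf := Subgroup.closure {g | ∃ i, 1 ≤ i ∧ i < n ∧ g = σ i}


variable (𝕜 : Type) [CommRing 𝕜]

/-- The canonical embedding of `B_∞` into its group algebra `𝕜B_∞`. -/
noncomputable def ι (g : BInf) : MonoidAlgebra 𝕜 BInf := MonoidAlgebra.of 𝕜 BInf g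

/-- The shift `↑ℓ` extended (as an algebra homomorphism) to the group algebra `𝕜B_∞`. -/
noncomputable def shiftA (l : ℕ) : MonoidAlgebra 𝕜 BInf →ₐ[𝕜] MonoidAlgebra 𝕜 BInf :=
  MonoidAlgebra.mapDomainAlgHom 𝕜 𝕜 (shift l)

/-- The braid shuffle elements `Ш_{m,n} ∈ 𝕜B_∞` (for natural `m, n`), determined by
`Ш_{0,n} = Ш_{m,0} = 1` and the Pascal-type recursion
`Ш_{m,n} = Ш_{m-1,n} + Ш_{m,n-1} β_{m,1}^{↑(n-1)}`. -/
noncomputable def Sh : ℕ → ℕ → MonoidAlgebra 𝕜 BInf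
  | 0, _ => 1
  | _ + 1, 0 => 1
  | m + 1, n + 1 => Sh m (n + 1) + Sh (m + 1) n * ι 𝕜 (shift n (β (m + 1) 1))
  termination_by m n => (m, n)

/-- The braid shuffle elements `Ш_{m,n} ∈ 𝕜B_∞` for integer indices: `Ш_{m,n} = 0` whenever
`m < 0` or `n < 0`. -/
noncomputable def ShZ (m n : ℤ) : MonoidAlgebra 𝕜 BInf :=
  if 0 ≤ m ∧ 0 ≤ n then Sh 𝕜 m.toNat n.toNat else 0

/-- The braid Pochhammer symbol
`P_{k,n}(x,y) = (x - β_{k,1} y)(x - β_{k+1,1} y) ⋯ (x - β_{k+n-1,1} y) ∈ 𝕜B_∞`. -/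
noncomputable def Poch (k n : ℕ) (x y : 𝕜) : MonoidAlgebra 𝕜 BInf :=
  ((List.range n).map fun t =>
    algebraMap 𝕜 (MonoidAlgebra 𝕜 BInf) x - algebraMap 𝕜 (MonoidAlgebra 𝕜 BInf) y * ι 𝕜 (β (k + t) 1)).prod


section AuxBraid

lemma shift_of (l n : ℕ) : shift l (PresentedGroup.of n) = PresentedGroup.of (n + l) := by
  simp [shift]

lemma shift_σ (l : ℕ) {i : ℕ} (hi : 1 ≤ i) : shift l (σ i) = σ (i + l) := by
  rw [σ, σ, shift_of]; congr 1; omega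

lemma shift_shift (a b : ℕ) (x : BInf) : shift a (shift b x) = shift (b + a) x := by
  have : (shift a).comp (shift b) = shift (b + a) := by
    ext n; simp [shift_of, add_assoc]
  exact congrFun (congrArg (fun f => f.toFun) this) x

lemma commute_σ_σ {i j : ℕ} (hi : 1 ≤ i) (h : i + 2 ≤ j) : Commute (σ i) (σ j) := by
  have := gen_comm (i := i - 1) (j := j - 1) (by omega)
  simpa [σ, Commute, SemiconjBy] using this

lemma asc_zero (i : ℕ) : asc i 0 = 1 := rfl

lemma asc_succ (i l : ℕ) : asc i (l + 1) = asc i l * σ (i + l) := by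
  simp [asc, List.range_succ]

lemma asc_one (i : ℕ) : asc i 1 = σ i := by
  simp [asc_succ, asc_zero]

lemma β_zero (l : ℕ) : β 0 l = 1 := rfl

lemma β_zero_right (k : ℕ) : β k 0 = 1 := by
  simp [β, asc_zero, List.eq_replicate_of_mem (l := (List.range k).map fun r => asc (k-r) 0)]

lemma β_succ (k l : ℕ) : β (k + 1) l = asc (k + 1) l * β k l := by
  rw [β, List.range_succ_eq_map]
  simp only [List.map_cons, List.prod_cons, List.map_map, Nat.sub_zero]
  rw [β]
  congr 2
  apply List.map_congr_left
  intro r _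
  simp [Function.comp, Nat.succ_sub_succ]

lemma commute_σ_asc {j p l : ℕ} (hp : 1 ≤ p) (h : p + l + 1 ≤ j) : Commute (σ j) (asc p l) := by
  induction l with
  | zero => rw [asc_zero]; exact Commute.one_right _
  | succ l ih =>
    rw [asc_succ]
    exact (ih (by omega)).mul_right ((commute_σ_σ (by omega) (by omega)).symm)

lemma commute_σ_β {j k c : ℕ} (h : k + c + 1 ≤ j) : Commute (σ j) (β k c) := by
  induction k with
  | zero => rw [β_zero]; exact Commute.one_right _
  | succ k ih =>
    rw [β_succ]
    exact (commute_σ_asc (by omega) (by omega)).mul_right (ih (by omega))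

lemma β1_succ (P : ℕ) : β (P + 1) 1 = σ (P + 1) * β P 1 := by
  rw [β_succ, asc_one]

lemma commute_shiftβ1_β (P k d : ℕ) : Commute (shift (k + d) (β P 1)) (β k d) := by
  induction P with
  | zero => rw [β_zero, map_one]; exact Commute.one_left _
  | succ P ih =>
    rw [β1_succ, map_mul, shift_σ _ (by omega)]
    exact (commute_σ_β (show k + d + 1 ≤ P + 1 + (k + d) by omega)).mul_left ih

lemma β_concat1 (k P : ℕ) : β (k + P) 1 = shift k (β P 1) * β k 1 := by
  induction P with
  | zero => simp [β_zero]
  | succ P ih =>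
    rw [show k + (P+1) = (k+P)+1 by omega, β1_succ, ih, β1_succ, map_mul,
      shift_σ _ (by omega), show P + 1 + k = k + P + 1 by omega]
    simp only [mul_assoc]

lemma β_col (k d : ℕ) : β k (d + 1) = β k d * shift d (β k 1) := by
  induction k with
  | zero => simp [β_zero]
  | succ k ih =>
    have hc : Commute (σ (k + 1 + d)) (β k d) := commute_σ_β (by omega)
    rw [β_succ k (d+1), ih, asc_succ, β_succ k d, β1_succ, map_mul, shift_σ _ (by omega)]
    simp only [mul_assoc]
    congr 1
    rw [← mul_assoc, hc.eq, mul_assoc]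

lemma star (k P c' : ℕ) :
    shift (k + c') (β P 1) * β k (c' + 1) = β k c' * shift c' (β (k + P) 1) := by
  rw [β_col k c', ← mul_assoc, (commute_shiftβ1_β P k c').eq, mul_assoc, β_concat1 k P,
    map_mul, shift_shift]

end AuxBraid

section AuxAlg

lemma ι_one : ι 𝕜 1 = 1 := map_one (MonoidAlgebra.of 𝕜 BInf)

lemma ι_mul (g h : BInf) : ι 𝕜 (g * h) = ι 𝕜 g * ι 𝕜 h := map_mul (MonoidAlgebra.of 𝕜 BInf) g h

lemma shiftA_ι (l : ℕ) (g : BInf) : shiftA 𝕜 l (ι 𝕜 g) = ι 𝕜 (shift l g) := by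
  simp [shiftA, ι, MonoidAlgebra.of_apply, MonoidAlgebra.mapDomainAlgHom_apply,
    Finsupp.mapDomain_single]

lemma Sh_zero_left (n : ℕ) : Sh 𝕜 0 n = 1 := by rw [Sh]

lemma Sh_zero_right (m : ℕ) : Sh 𝕜 m 0 = 1 := by
  cases m with
  | zero => rw [Sh]
  | succ m => rw [Sh]

lemma Sh_succ_succ (m n : ℕ) :
    Sh 𝕜 (m + 1) (n + 1) = Sh 𝕜 m (n + 1) + Sh 𝕜 (m + 1) n * ι 𝕜 (shift n (β (m + 1) 1)) := by
  rw [Sh]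

lemma ShZ_eq (p q : ℕ) : ShZ 𝕜 (p : ℤ) (q : ℤ) = Sh 𝕜 p q := by
  simp [ShZ]

lemma ShZ_neg {p : ℤ} (h : p < 0) (q : ℤ) : ShZ 𝕜 p q = 0 := by
  rw [ShZ, if_neg]
  omega

lemma ShZ_zero_right {p : ℤ} (h : 0 ≤ p) : ShZ 𝕜 p 0 = 1 := by
  obtain ⟨q, rfl⟩ := Int.eq_ofNat_of_zero_le h
  rw [show (0 : ℤ) = ((0 : ℕ) : ℤ) from rfl, ShZ_eq, Sh_zero_right]

lemma ShZ_rec (p : ℤ) (a : ℕ) :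
    ShZ 𝕜 p ((a : ℤ) + 1) =
      ShZ 𝕜 (p - 1) ((a : ℤ) + 1) + ShZ 𝕜 p (a : ℤ) * ι 𝕜 (shift a (β p.toNat 1)) := by
  rcases lt_trichotomy p 0 with hp | hp | hp
  · rw [ShZ_neg 𝕜 hp, ShZ_neg 𝕜 (by omega), ShZ_neg 𝕜 hp]
    simp
  · subst hp
    rw [show ((a : ℤ) + 1) = ((a + 1 : ℕ) : ℤ) by push_cast; ring,
      show (0 : ℤ) = ((0 : ℕ) : ℤ) from rfl, ShZ_eq, ShZ_eq, Sh_zero_left, Sh_zero_left,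
      ShZ_neg 𝕜 (by norm_num), Int.toNat_natCast, β_zero, map_one, ι_one]
    simp
  · obtain ⟨q, rfl⟩ : ∃ q : ℕ, p = (q : ℤ) + 1 := ⟨(p - 1).toNat, by omega⟩
    rw [show ((q : ℤ) + 1) = ((q + 1 : ℕ) : ℤ) by push_cast; ring,
      show ((a : ℤ) + 1) = ((a + 1 : ℕ) : ℤ) by push_cast; ring,
      show ((q + 1 : ℕ) : ℤ) - 1 = ((q : ℕ) : ℤ) by push_cast; ring,
      ShZ_eq, ShZ_eq, ShZ_eq, Int.toNat_natCast, Sh_succ_succ]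

end AuxAlg


lemma case_a0 (m n : ℕ) :
    ShZ 𝕜 ((m : ℤ) + n - (0:ℕ)) ((0:ℕ) : ℤ) =
      ∑ b ∈ Finset.range (0 + 1),
        ShZ 𝕜 ((m : ℤ) - b) b *
          shiftA 𝕜 m (ShZ 𝕜 ((n : ℤ) - ((0 - b : ℕ) : ℤ)) ((0 - b : ℕ) : ℤ)) *
          ι 𝕜 (shift b (β (m - b) (0 - b))) := by
  rw [Finset.sum_range_one]
  simp only [Nat.cast_zero, Nat.sub_zero, sub_zero, Nat.zero_sub, Nat.cast_ofNat,
    Nat.sub_self, β_zero_right, map_one, ι_one, mul_one]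
  rw [ShZ_zero_right 𝕜 (by positivity), ShZ_zero_right 𝕜 (by positivity),
    ShZ_zero_right 𝕜 (by positivity), map_one, mul_one]

lemma case_n0 (a m : ℕ) :
    ShZ 𝕜 ((m : ℤ) + (0:ℕ) - a) a =
      ∑ b ∈ Finset.range (a + 1),
        ShZ 𝕜 ((m : ℤ) - b) b *
          shiftA 𝕜 m (ShZ 𝕜 (((0:ℕ) : ℤ) - ((a - b : ℕ) : ℤ)) ((a - b : ℕ) : ℤ)) *
          ι 𝕜 (shift b (β (m - b) (a - b))) := by
  rw [Finset.sum_eq_single_of_mem a (Finset.self_mem_range_succ a)]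
  · rw [Nat.sub_self]
    simp only [Nat.cast_zero, sub_zero, β_zero_right, map_one, ι_one, mul_one]
    rw [ShZ_zero_right 𝕜 le_rfl, map_one, mul_one, add_zero]
  · intro b hb hne
    have hb' : b < a := by have := Finset.mem_range.mp hb; omega
    rw [ShZ_neg 𝕜 (show (((0:ℕ)):ℤ) - ((a - b : ℕ):ℤ) < 0 by omega)]
    simp

lemma main_aux (s : ℕ) : ∀ a m n : ℕ, a + n ≤ s →
    ShZ 𝕜 ((m : ℤ) + n - a) a =
      ∑ b ∈ Finset.range (a + 1),
        ShZ 𝕜 ((m : ℤ) - b) b *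
          shiftA 𝕜 m (ShZ 𝕜 ((n : ℤ) - ((a - b : ℕ) : ℤ)) ((a - b : ℕ) : ℤ)) *
          ι 𝕜 (shift b (β (m - b) (a - b))) := by
  induction s with
  | zero =>
    intro a m n hs
    have ha : a = 0 := by omega
    subst ha
    exact case_a0 𝕜 m n
  | succ s IH =>
    intro a m n hs
    match a, n with
    | 0, n => exact case_a0 𝕜 m n
    | a+1, 0 => exact case_n0 𝕜 (a+1) m
    | A+1, n'+1 =>
      have h1 := IH (A+1) m n' (by omega)
      have h2 := IH A m n' (by omega)
      have hrec := ShZ_rec 𝕜 ((m:ℤ) + ((n'+1 : ℕ) : ℤ) - ((A+1 : ℕ) : ℤ)) A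
      rw [show ((A:ℤ) + 1) = (((A+1:ℕ)) : ℤ) by push_cast; ring] at hrec
      rw [hrec,
        show ((m:ℤ) + ((n'+1:ℕ):ℤ) - ((A+1:ℕ):ℤ)) - 1 = (m:ℤ) + (n' : ℤ) - ((A+1:ℕ):ℤ) by push_cast; ring,
        show ((m:ℤ) + ((n'+1:ℕ):ℤ) - ((A+1:ℕ):ℤ)) = (m:ℤ) + (n':ℤ) - (A:ℤ) by push_cast; ring,
        h1, h2, Finset.sum_mul]

      have hite : (∑ b ∈ Finset.range (A + 1 + 1), (if b ≤ A then
            ShZ 𝕜 ((m:ℤ) - b) b * shiftA 𝕜 m (ShZ 𝕜 ((n':ℤ) - ((A - b : ℕ):ℤ)) ((A - b : ℕ):ℤ)) *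
              ι 𝕜 (shift b (β (m - b) (A - b))) *
              ι 𝕜 (shift A (β ((m:ℤ) + (n':ℤ) - (A:ℤ)).toNat 1)) else 0)) =
          ∑ b ∈ Finset.range (A + 1),
            ShZ 𝕜 ((m:ℤ) - b) b * shiftA 𝕜 m (ShZ 𝕜 ((n':ℤ) - ((A - b : ℕ):ℤ)) ((A - b : ℕ):ℤ)) *
              ι 𝕜 (shift b (β (m - b) (A - b))) *
              ι 𝕜 (shift A (β ((m:ℤ) + (n':ℤ) - (A:ℤ)).toNat 1)) := by
        rw [Finset.sum_range_succ, if_neg (by omega), add_zero]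
        exact Finset.sum_congr rfl fun b hb => if_pos (by
          have := Finset.mem_range.mp hb; omega)
      have key : ∀ b ∈ Finset.range (A + 1 + 1),
          ShZ 𝕜 ((m:ℤ) - b) b *
              shiftA 𝕜 m (ShZ 𝕜 (((n'+1:ℕ):ℤ) - ((A + 1 - b : ℕ):ℤ)) ((A + 1 - b : ℕ):ℤ)) *
              ι 𝕜 (shift b (β (m - b) (A + 1 - b))) =
            ShZ 𝕜 ((m:ℤ) - b) b *
              shiftA 𝕜 m (ShZ 𝕜 ((n':ℤ) - ((A + 1 - b : ℕ):ℤ)) ((A + 1 - b : ℕ):ℤ)) *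
              ι 𝕜 (shift b (β (m - b) (A + 1 - b))) +
            (if b ≤ A then
              ShZ 𝕜 ((m:ℤ) - b) b * shiftA 𝕜 m (ShZ 𝕜 ((n':ℤ) - ((A - b : ℕ):ℤ)) ((A - b : ℕ):ℤ)) *
                ι 𝕜 (shift b (β (m - b) (A - b))) *
                ι 𝕜 (shift A (β ((m:ℤ) + (n':ℤ) - (A:ℤ)).toNat 1)) else 0) := by
        intro b hb
        have hb' : b ≤ A + 1 := by have := Finset.mem_range.mp hb; omega
        by_cases hbA : b ≤ A
        · rw [if_pos hbA]
          have hc : A + 1 - b = (A - b) + 1 := by omega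
          rw [hc, show ((A - b + 1 : ℕ) : ℤ) = ((A - b : ℕ) : ℤ) + 1 by push_cast; ring]
          rw [ShZ_rec 𝕜 (((n'+1:ℕ):ℤ) - (((A - b : ℕ):ℤ) + 1)) (A - b)]
          rw [show ((n'+1:ℕ):ℤ) - (((A - b : ℕ):ℤ) + 1) - 1 = ((n':ℕ):ℤ) - (((A - b : ℕ):ℤ) + 1)
              by push_cast; ring,
            show ((n'+1:ℕ):ℤ) - (((A - b : ℕ):ℤ) + 1) = ((n':ℕ):ℤ) - ((A - b : ℕ):ℤ)
              by push_cast; ring]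
          rw [map_add, mul_add, add_mul]
          congr 1
          by_cases hbm : b ≤ m
          · by_cases hcn : A - b ≤ n'
            · have e1 : ((n':ℤ) - ((A - b : ℕ):ℤ)).toNat = n' - (A - b) := by omega
              have e2 : ((m:ℤ) + (n':ℤ) - (A:ℤ)).toNat = (m - b) + (n' - (A - b)) := by omega
              rw [e1, e2, map_mul, shiftA_ι]
              have hg := congrArg (shift b) (star (m - b) (n' - (A - b)) (A - b))
              simp only [map_mul, shift_shift] at hg
              rw [show (m - b) + (A - b) + b = (A - b) + m by omega,
                show (A - b) + b = A by omega] at hg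
              simp only [shift_shift, mul_assoc]
              rw [← ι_mul, ← ι_mul, hg]
            · rw [ShZ_neg 𝕜 (show ((n':ℕ):ℤ) - ((A - b:ℕ):ℤ) < 0 by omega)]
              simp
          · rw [ShZ_neg 𝕜 (show ((m:ℕ):ℤ) - ((b:ℕ):ℤ) < 0 by omega)]
            simp
        · rw [if_neg hbA, add_zero]
          have hc : A + 1 - b = 0 := by omega
          rw [hc]
          rw [show (((0:ℕ)):ℤ) = (0:ℤ) from rfl, sub_zero, sub_zero,
            ShZ_zero_right 𝕜 (by positivity), ShZ_zero_right 𝕜 (by positivity)]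
      conv_rhs => rw [Finset.sum_congr rfl key]
      rw [Finset.sum_add_distrib]
      congr 1
      exact hite.symm
/-- braid Vandermonde identity, base case `k = 0`: for all `a, m, n ≥ 0`,
`Ш_{m+n-a,a} = Σ_{b+c=a} Ш_{m-b,b} Ш_{n-c,c}^{↑m} β_{m-b,c}^{↑b}`
(summands with `b > m` or `c > n` vanish). -/
theorem braid_vandermonde_base (a m n : ℕ) :
    ShZ 𝕜 ((m : ℤ) + n - a) a =
      ∑ b ∈ Finset.range (a + 1),
        ShZ 𝕜 ((m : ℤ) - b) b *
          shiftA 𝕜 m (ShZ 𝕜 ((n : ℤ) - ((a - b : ℕ) : ℤ)) ((a - b : ℕ) : ℤ)) *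
          ι 𝕜 (shift b (β (m - b) (a - b))) := by
  exact main_aux 𝕜 (a + n) a m n le_rfl

end BraidPaper
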